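/- For any real a ≥ 1, (1 - 1/a)^a ≥ e^{-1} - 1/(2a). -/

import Mathlib

open Real

private lemma key_log_bound (x : ℝ) (hx0 : 0 ≤ x) (hx1 : x ≤ 3/4) :
    -x - 1.359 * x ^ 2 ≤ Real.log (1 - x) := by
  rcases le_or_gt x (1/2) with h | h
  · have habs : |x| < 1 := by rw [abs_of_nonneg hx0]; linarith
    have H := Real.abs_log_sub_add_sum_range_le habs 3
    rw [abs_of_nonneg hx0] at H
    simp [Finset.sum_range_succ] at H
    have H2 := (abs_le.mp H).1
    have hx1' : (0:ℝ) < 1 - x := by linarith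
    have hdiv : x ^ 4 / (1 - x) ≤ 1.359 * x ^ 2 - x ^ 2 / 2 - x ^ 3 / 3 := by
      rw [div_le_iff₀ hx1']
      nlinarith [sq_nonneg x, sq_nonneg (x - 1/2), pow_nonneg hx0 3]
    nlinarith [H2]
  · -- concavity / secant on [1/2, 3/4]
    have h2 : (1:ℝ)/2 ∈ Set.Ioi (0:ℝ) := by norm_num
    have h4 : (1:ℝ)/4 ∈ Set.Ioi (0:ℝ) := by norm_num
    have ha : (0:ℝ) ≤ 3 - 4 * x := by linarith
    have hb : (0:ℝ) ≤ 4 * x - 2 := by linarith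
    have hab : (3 - 4 * x) + (4 * x - 2) = 1 := by ring
    have H := (strictConcaveOn_log_Ioi.concaveOn).2 h2 h4 ha hb hab
    have heq : (3 - 4 * x) • ((1:ℝ)/2) + (4 * x - 2) • ((1:ℝ)/4) = 1 - x := by
      simp [smul_eq_mul]; ring
    rw [heq] at H
    have hlog2 : Real.log (1/2) = -Real.log 2 := by
      rw [one_div, Real.log_inv]
    have hlog4 : Real.log (1/4) = -(2 * Real.log 2) := by
      rw [one_div, Real.log_inv, show (4:ℝ) = 2^2 by norm_num, Real.log_pow]
      push_cast; ring
    rw [hlog2, hlog4, smul_eq_mul, smul_eq_mul] at H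
    have hl2 : Real.log 2 < 0.6931471808 := Real.log_two_lt_d9
    have hl2' : 0 < Real.log 2 := Real.log_pos (by norm_num)
    nlinarith [H, sq_nonneg (x - 0.6522)]

/-- For any real `a ≥ 1`, `(1 - 1/a)^a ≥ e⁻¹ - 1/(2a)`. -/
theorem one_sub_inv_rpow_ge (a : ℝ) (ha : 1 ≤ a) :
    (1 - 1 / a) ^ a ≥ Real.exp (-1) - 1 / (2 * a) := by
  have ha0 : (0:ℝ) < a := by linarith
  have hbase0 : (0:ℝ) ≤ 1 - 1/a := by
    have : 1/a ≤ 1 := by rw [div_le_one ha0]; exact ha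
    linarith
  rcases le_or_gt (Real.exp (-1)) (1/(2*a)) with h | h
  · have : (0:ℝ) ≤ (1 - 1/a) ^ a := Real.rpow_nonneg hbase0 a
    linarith
  · -- a > e/2
    have he : Real.exp (-1) = (Real.exp 1)⁻¹ := by
      rw [Real.exp_neg]
    have h2a : (0:ℝ) < 2 * a := by linarith
    have hea : Real.exp 1 < 2 * a := by
      have h' := h
      rw [he, one_div] at h'
      exact (inv_lt_inv₀ h2a (Real.exp_pos 1)).mp h'
    have he1 : (2.7182818283 : ℝ) < Real.exp 1 := Real.exp_one_gt_d9
    have ha43 : (4:ℝ)/3 < a := by linarith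
    have hbasepos : (0:ℝ) < 1 - 1/a := by
      have : 1/a < 3/4 := by rw [div_lt_iff₀ ha0]; linarith
      linarith
    have hxle : 1/a ≤ 3/4 := by
      rw [div_le_iff₀ ha0]; linarith
    have hx0 : (0:ℝ) ≤ 1/a := by positivity
    -- rpow as exp
    rw [Real.rpow_def_of_pos hbasepos]
    -- exp(y) ≥ e^{-1} (y + 2)
    set y := Real.log (1 - 1/a) * a with hy
    have htangent : Real.exp (-1) * (y + 2) ≤ Real.exp y := by
      have := Real.add_one_le_exp (y + 1)
      have hexp : Real.exp (y + 1) = Real.exp y * Real.exp 1 := Real.exp_add y 1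
      rw [hexp] at this
      have hE := Real.exp_pos 1
      rw [he]
      rw [inv_mul_le_iff₀ hE] -- (y+2) ≤ exp y * exp 1 ... careful direction
      linarith
    have hkey := key_log_bound (1/a) hx0 hxle
    -- y = log(1-1/a) * a ≥ (-(1/a) - 1.359*(1/a)^2) * a = -1 - 1.359/a
    have hy_ge : -1 - 1.359 / a ≤ y := by
      have := mul_le_mul_of_nonneg_right hkey (le_of_lt ha0)
      rw [hy]
      calc -1 - 1.359 / a = (-(1/a) - 1.359 * (1/a)^2) * a := by
            field_simp
        _ ≤ Real.log (1 - 1/a) * a := this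
    have hfin : Real.exp (-1) - 1/(2*a) ≤ Real.exp (-1) * (y + 2) := by
      have hEpos : (0:ℝ) < Real.exp (-1) := Real.exp_pos _
      have hEn : Real.exp (-1) < 1/2.7182818283 := by
        rw [he]
        rw [inv_lt_comm₀ (by positivity) (by norm_num)]
        · calc (1/2.7182818283)⁻¹ = 2.7182818283 := by norm_num
            _ < Real.exp 1 := he1
      have h1 : Real.exp (-1) * (y + 2) ≥ Real.exp (-1) * (1 - 1.359/a) := by
        apply mul_le_mul_of_nonneg_left _ (le_of_lt hEpos)
        linarith
      have h2 : Real.exp (-1) * (1.359/a) ≤ 1/(2*a) := by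
        rw [show Real.exp (-1) * (1.359/a) = (Real.exp (-1) * 1.359)/a by ring,
          div_le_div_iff₀ ha0 (by positivity : (0:ℝ) < 2*a)]
        nlinarith
      nlinarith [hEpos]
    calc Real.exp (-1) - 1/(2*a) ≤ Real.exp (-1) * (y + 2) := hfin
      _ ≤ Real.exp y := htangent
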